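/- Let w(1), …, w(k) be words over ℕ with pairwise disjoint alphabets such that the concatenation v = w(1)w(2)⋯w(k) is a permutation of {1,…,n} (in one-line notation), each w(i) has its least letter in its last position, and these least letters are in increasing order across i. Then v is the minimum, with respect to the reverse colexicographic order on S_n, among all permutations of {1,…,n} containing each w(i) as a (not necessarily contiguous) subword. -/

import Mathlib

/-- The reverse colexicographic order on words: `w ≤ v` iff `w = v` or, at the last
position (reading from the right) where they differ, `w` has the larger letter. -/
def rcoLE (w v : List ℕ) : Prop :=
  w = v ∨ List.Lex (· < ·) v.reverse w.reverse

lemma getLast!_concat' (a : List ℕ) (x : ℕ) : (a ++ [x]).getLast! = x :=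
  List.getLast!_of_getLast? (List.getLast?_concat (l := a))

/-- If `l` is a sublist of `us ++ [m]` and `m ∉ l`, then `l` is a sublist of `us`. -/
lemma sublist_of_not_mem_last {l us : List ℕ} {m : ℕ}
    (h : l.Sublist (us ++ [m])) (hm : m ∉ l) : l.Sublist us := by
  rw [List.sublist_append_iff] at h
  obtain ⟨l₁, l₂, rfl, h₁, h₂⟩ := h
  rcases List.sublist_singleton.mp h₂ with rfl | rfl
  · simpa using h₁
  · exact absurd (by simp) hm

/-- Cancellation of the final letter of a sublist relation. -/
lemma sublist_cancel_last {a us : List ℕ} {m : ℕ}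
    (h : (a ++ [m]).Sublist (us ++ [m])) (hm : m ∉ us) : a.Sublist us := by
  rw [List.sublist_append_iff] at h
  obtain ⟨l₁, l₂, heq, h₁, h₂⟩ := h
  rcases List.sublist_singleton.mp h₂ with rfl | rfl
  · rw [List.append_nil] at heq
    subst heq
    exact absurd (h₁.subset (by simp)) hm
  · rw [List.append_cancel_right heq]
    exact h₁

lemma rcoLE_concat {v u : List ℕ} (m : ℕ) (h : rcoLE v u) :
    rcoLE (v ++ [m]) (u ++ [m]) := by
  rcases h with rfl | h
  · exact Or.inl rfl
  · right
    rw [List.reverse_append, List.reverse_append]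
    exact List.Lex.cons h

/-- The key generalized lemma. -/
lemma key_lemma : ∀ (N : ℕ) (u : List ℕ) (L : List (List ℕ)),
    u.length + L.length ≤ N →
    L.flatten.Nodup →
    L.Pairwise (fun a b => ∀ x ∈ b, a.getLast! < x) →
    u.Perm L.flatten → (∀ l ∈ L, l.Sublist u) → rcoLE L.flatten u := by
  intro N
  induction N with
  | zero =>
    intro u L hlen _ _ hperm _
    have hu : u = [] := List.length_eq_zero_iff.mp (by omega)
    subst hu
    exact Or.inl hperm.symm.eq_nil
  | succ N IHN =>
    intro u L hlen hnd hpw hperm hsub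
    rcases List.eq_nil_or_concat u with rfl | ⟨us, x, rfl⟩
    · exact Or.inl hperm.symm.eq_nil
    rw [List.concat_eq_append] at *
    rcases List.eq_nil_or_concat L with rfl | ⟨L₀, w, rfl⟩
    · simp at hperm
    rw [List.concat_eq_append] at *
    rcases List.eq_nil_or_concat w with rfl | ⟨w₀, m, rfl⟩
    · -- the last word is empty: drop it and recurse
      have hflat0 : (L₀ ++ [([] : List ℕ)]).flatten = L₀.flatten := by simp
      rw [hflat0] at hperm hnd ⊢
      rw [List.pairwise_append] at hpw
      refine IHN (us ++ [x]) L₀ (by simp at hlen ⊢; omega) hnd hpw.1 hperm ?_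
      intro l hl
      exact hsub l (by simp [hl])
    rw [List.concat_eq_append] at *
    have hflat : (L₀ ++ [w₀ ++ [m]]).flatten = (L₀.flatten ++ w₀) ++ [m] := by simp
    have hund : (us ++ [x]).Nodup := hperm.symm.nodup hnd
    have hxus : x ∉ us := by
      intro hx
      exact (List.disjoint_of_nodup_append hund) hx (by simp)
    -- x is the last letter of some word of L
    have hxmem : x ∈ (L₀ ++ [w₀ ++ [m]]).flatten := hperm.subset (by simp)
    obtain ⟨l, hlL, hxl⟩ := List.mem_flatten.mp hxmem
    obtain ⟨a, b, rfl⟩ := List.append_of_mem hxl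
    have hb : b = [] := by
      rcases b with _ | ⟨y, b'⟩
      · rfl
      · exfalso
        have h2 : (x :: y :: b').Sublist (us ++ [x]) :=
          (List.sublist_append_right a _).trans (hsub _ hlL)
        rw [List.sublist_append_iff] at h2
        obtain ⟨l₁, l₂, heq, h₁, h₂⟩ := h2
        rcases l₁ with _ | ⟨c, l₁'⟩
        · rw [List.nil_append] at heq
          subst heq
          have := h₂.length_le
          simp at this
        · rw [List.cons_append] at heq
          injection heq with hc _
          subst hc
          exact hxus (h₁.subset (by simp))
    subst hb
    -- so x is the last letter of its word; compare with m
    have hxm : x ≤ m := by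
      rcases List.mem_append.mp hlL with hl₀ | hlw
      · rw [List.pairwise_append] at hpw
        have := hpw.2.2 _ hl₀ (w₀ ++ [m]) (by simp) m (by simp)
        rw [getLast!_concat'] at this
        omega
      · have hlw' : a ++ [x] = w₀ ++ [m] := by simpa using hlw
        have := congrArg List.getLast! hlw'
        rw [getLast!_concat', getLast!_concat'] at this
        omega
    rcases lt_or_eq_of_le hxm with hlt | rfl
    · right
      rw [hflat]
      simp only [List.reverse_append, List.reverse_singleton, List.singleton_append]
      exact List.Lex.rel hlt
    · -- x = m : strip the last letter and apply the IH to L₀ ++ [w₀]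
      have hdisj2 : List.Disjoint L₀.flatten (w₀ ++ [x]) := by
        have h3 := hnd
        rw [hflat, List.append_assoc] at h3
        exact List.disjoint_of_nodup_append h3
      have hflat' : (L₀ ++ [w₀]).flatten = L₀.flatten ++ w₀ := by simp
      have hnd' : (L₀ ++ [w₀]).flatten.Nodup := by
        rw [hflat']
        rw [hflat] at hnd
        exact (List.sublist_append_left (L₀.flatten ++ w₀) [x]).nodup hnd
      have hpw' : (L₀ ++ [w₀]).Pairwise (fun a b => ∀ x ∈ b, a.getLast! < x) := by
        rw [List.pairwise_append] at hpw ⊢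
        refine ⟨hpw.1, by simp, ?_⟩
        intro p hp q hq y hy
        have hq' : q = w₀ := by simpa using hq
        rw [hq'] at hy
        exact hpw.2.2 p hp (w₀ ++ [x]) (by simp) y (by simp [hy])
      have hperm' : us.Perm (L₀ ++ [w₀]).flatten := by
        have h4 : (us ++ [x]).Perm ((L₀.flatten ++ w₀) ++ [x]) := by
          rw [← hflat]; exact hperm
        rw [hflat']
        exact (List.perm_append_right_iff [x]).mp h4
      have hsub' : ∀ l ∈ L₀ ++ [w₀], l.Sublist us := by
        intro l hl
        rcases List.mem_append.mp hl with hl₀ | hlw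
        · have hml : x ∉ l := fun hml =>
            hdisj2 (List.mem_flatten.mpr ⟨l, hl₀, hml⟩) (by simp)
          exact sublist_of_not_mem_last (hsub l (by simp [hl₀])) hml
        · simp only [List.mem_singleton] at hlw
          subst hlw
          exact sublist_cancel_last (hsub (l ++ [x]) (by simp)) hxus
      have hIH := IHN us (L₀ ++ [w₀]) (by simp at hlen ⊢; omega) hnd' hpw' hperm' hsub'
      rw [hflat'] at hIH
      rw [hflat]
      exact rcoLE_concat x hIH

theorem least_perm_containing_subwords (n : ℕ) (L : List (List ℕ))
    (hdisj : L.Pairwise (fun a b => ∀ x ∈ a, x ∉ b))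
    (hperm : L.flatten.Perm ((List.range n).map (· + 1)))
    (hmin : ∀ l ∈ L, l ≠ [] ∧ ∀ x ∈ l, l.getLast! ≤ x)
    (hinc : L.Pairwise (fun a b => a.getLast! < b.getLast!)) :
    ∀ u : List ℕ, u.Perm ((List.range n).map (· + 1)) →
      (∀ l ∈ L, l.Sublist u) → rcoLE L.flatten u := by
  intro u hu hsub
  have hrange : ((List.range n).map (· + 1)).Nodup :=
    List.Nodup.map (fun a b h => by omega) (List.nodup_range (n := n))
  have hnd : L.flatten.Nodup := hperm.nodup_iff.mpr hrange
  have hpw : L.Pairwise (fun a b => ∀ x ∈ b, a.getLast! < x) := by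
    refine List.Pairwise.imp_of_mem ?_ hinc
    intro a b ha hb h x hx
    exact lt_of_lt_of_le h ((hmin b hb).2 x hx)
  exact key_lemma (u.length + L.length) u L le_rfl hnd hpw (hu.trans hperm.symm) hsub
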